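/- arXiv:1902.01708 — 2 statements merged into one kernel-verified Lean document; each statement's English description precedes it below -/
import Mathlib

section
/- Let S_𝐭 = (S_{1,t₁},…,S_{d,t_d}) be a toral left invertible commuting d-tuple of weighted translation operators with t₁,…,t_d > 0 and let S_𝐭' = (S_{1,t₁}',…,S_{d,t_d}') be its toral Cauchy dual tuple. Then S_𝐭' possesses the wandering subspace property: the closed linear span of ⋃_{k ∈ ℕ^d} S_{1,t₁}'^{k₁}⋯S_{d,t_d}'^{k_d} E equals L²(ℝ₊), where E is the joint kernel of the adjoint tuple S_𝐭^* (which coincides with the joint kernel of S_𝐭'^*). -/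
open MeasureTheory Set ContinuousLinearMap

noncomputable section

namespace WTS

/-- Lebesgue measure restricted to `ℝ₊ = [0, ∞)`. -/
def mu : Measure ℝ := volume.restrict (Set.Ici (0 : ℝ))

/-- The complex Hilbert space `L²(ℝ₊)`. -/
abbrev H : Type := Lp ℂ 2 mu

/-- A symbol: a function `φ` that is continuous and positive on `ℝ₊ = [0, ∞)`. -/
structure IsSymbol (φ : ℝ → ℝ) : Prop where
  cont : ContinuousOn φ (Set.Ici 0)
  pos : ∀ x ∈ Set.Ici (0 : ℝ), 0 < φ x

/-- The weight function `φ_t(x) = √(φ(x)/φ(x−t))` for `x ≥ t`, and `0` for `x < t`. -/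
def wt (φ : ℝ → ℝ) (t : ℝ) (x : ℝ) : ℝ :=
  if t ≤ x then Real.sqrt (φ x / φ (x - t)) else 0

/-- `S` is the weighted translation operator with symbol `φ` and translation `t`:
`(S f)(x) = φ_t(x) f(x−t)` for `x ≥ t` and `0` for `x < t`, where `φ_t` is essentially
bounded. -/
structure IsWT (φ : ℝ → ℝ) (t : ℝ) (S : H →L[ℂ] H) : Prop where
  bdd : ∃ C : ℝ, ∀ᵐ x ∂mu, wt φ t x ≤ C
  eval : ∀ f : H, ∀ᵐ x ∂mu,
    (S f : ℝ → ℂ) x = if t ≤ x then (wt φ t x : ℂ) * (f : ℝ → ℂ) (x - t) else 0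

/-- `φ_t` is essentially bounded below by a positive constant on `[t, ∞)`;
this is precisely left invertibility of the weighted translation operator. -/
def LowerBdd (φ : ℝ → ℝ) (t : ℝ) : Prop :=
  ∃ c : ℝ, 0 < c ∧ ∀ᵐ x ∂mu, t ≤ x → c ≤ wt φ t x

/-- `T` is the Cauchy dual of the weighted translation operator with symbol `φ` and
translation `t`: `(T f)(x) = φ_t(x)⁻¹ f(x−t)` for `x ≥ t` and `0` for `x < t`. -/
def IsWTDual (φ : ℝ → ℝ) (t : ℝ) (T : H →L[ℂ] H) : Prop :=
  ∀ f : H, ∀ᵐ x ∂mu,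
    (T f : ℝ → ℂ) x = if t ≤ x then ((wt φ t x : ℂ))⁻¹ * (f : ℝ → ℂ) (x - t) else 0

/-- The ordered product `S₁^{k₁} ⋯ S_d^{k_d}` of powers of a `d`-tuple of operators. -/
def tuplePow {d : ℕ} (S : Fin d → (H →L[ℂ] H)) (k : Fin d → ℕ) : H →L[ℂ] H :=
  (List.ofFn fun i => S i ^ k i).prod

/-- The joint kernel `E = ⋂ᵢ ker Sᵢ*` of the adjoint tuple. -/
def jointKer {d : ℕ} (S : Fin d → (H →L[ℂ] H)) : Set H :=
  {f : H | ∀ i, ContinuousLinearMap.adjoint (S i) f = 0}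

end WTS

namespace WTS


lemma prod_ofFn_eq_single {M : Type*} [Monoid M] : ∀ {d : ℕ} (f : Fin d → M) (j : Fin d),
    (∀ i, i ≠ j → f i = 1) → (List.ofFn f).prod = f j := by
  intro d
  induction d with
  | zero => exact fun _ j => j.elim0
  | succ d ih =>
    intro f j h
    rw [List.ofFn_succ, List.prod_cons]
    rcases Fin.eq_zero_or_eq_succ j with hj | ⟨j', rfl⟩
    · subst hj
      have h1 : ∀ x ∈ List.ofFn (fun i : Fin d => f i.succ), x = 1 := by
        intro x hx
        obtain ⟨i, rfl⟩ := List.mem_ofFn.mp hx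
        exact h i.succ (Fin.succ_ne_zero i)
      rw [List.prod_eq_one h1, mul_one]
    · rw [h 0 (Ne.symm (Fin.succ_ne_zero j')), one_mul]
      exact ih (fun i => f i.succ) j' (fun i hi => h i.succ (by simpa using hi))

lemma ae_shift {c : ℝ} (hc : 0 ≤ c) {P : ℝ → Prop} (h : ∀ᵐ y ∂mu, P y) :
    ∀ᵐ x ∂mu, c ≤ x → P (x - c) := by
  rw [mu, ae_restrict_iff' measurableSet_Ici] at h
  have hq : Measure.QuasiMeasurePreserving (fun x : ℝ => x - c) volume volume := by
    have := (measurePreserving_add_right (volume : Measure ℝ) (-c)).quasiMeasurePreserving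
    simpa [sub_eq_add_neg] using this
  have h2 := hq.ae h
  have h3 : ∀ᵐ x ∂mu, (x - c ∈ Ici (0:ℝ) → P (x - c)) := ae_restrict_of_ae h2
  filter_upwards [h3] with x hx hcx
  exact hx (by simp only [mem_Ici]; linarith)

lemma wt_shift_aemeasurable {φ : ℝ → ℝ} (hφ : IsSymbol φ) {m : ℝ} (hm : 0 < m)
    {a : ℝ} (ha : 0 ≤ a) : AEMeasurable (fun x => wt φ m (x - a)) mu := by
  have heq : (fun x => wt φ m (x - a)) =
      (Ici (a + m)).indicator (fun x => Real.sqrt (φ (x - a) / φ (x - a - m))) := by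
    funext x
    by_cases hx : m ≤ x - a
    · rw [wt, if_pos hx, indicator_of_mem (by simp only [mem_Ici]; linarith)]
    · rw [wt, if_neg hx,
        indicator_of_notMem (by simp only [mem_Ici]; intro hcon; exact hx (by linarith))]
  rw [heq, aemeasurable_indicator_iff measurableSet_Ici]
  have hres : mu.restrict (Ici (a + m)) = volume.restrict (Ici (a + m)) := by
    rw [mu, Measure.restrict_restrict measurableSet_Ici,
      inter_eq_left.mpr (Ici_subset_Ici.mpr (by linarith))]
  rw [hres]
  have c1 : ContinuousOn (fun x => φ (x - a)) (Ici (a + m)) :=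
    hφ.cont.comp (continuous_id.sub continuous_const).continuousOn
      (fun x hx => by simp only [mem_Ici] at *; linarith)
  have c2 : ContinuousOn (fun x => φ (x - a - m)) (Ici (a + m)) :=
    hφ.cont.comp ((continuous_id.sub continuous_const).sub continuous_const).continuousOn
      (fun x hx => by simp only [mem_Ici] at *; linarith)
  exact (Real.continuous_sqrt.comp_continuousOn
      (c1.div c2 (fun x hx => ne_of_gt (hφ.pos _ (by simp only [mem_Ici] at *; linarith))))
    ).aemeasurable measurableSet_Ici

/-- the toral Cauchy dual tuple `S_𝐭'` of a toral left invertible commuting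
`d`-tuple `S_𝐭` possesses the wandering subspace property: the closed linear span of
`⋃_{k ∈ ℕ^d} S_𝐭'^k E` is all of `L²(ℝ₊)`, where `E` is the joint kernel of `S_𝐭*`. -/
theorem statement_11 {d : ℕ} (φ : Fin d → ℝ → ℝ) (t : Fin d → ℝ)
    (S S' : Fin d → (H →L[ℂ] H))
    (hφ : ∀ i, IsSymbol (φ i)) (ht : ∀ i, 0 < t i)
    (hS : ∀ i, IsWT (φ i) (t i) (S i))
    (hcomm : ∀ i j, S i * S j = S j * S i)
    (hlb : ∀ i, LowerBdd (φ i) (t i))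
    (hS' : ∀ i, IsWTDual (φ i) (t i) (S' i)) :
    (Submodule.span ℂ
        (⋃ k : Fin d → ℕ, ⇑(tuplePow S' k) '' jointKer S)).topologicalClosure = ⊤ := by
  classical
  rcases Nat.eq_zero_or_pos d with hd | hd
  · subst hd
    have hU : (⋃ k : Fin 0 → ℕ, ⇑(tuplePow S' k) '' jointKer S) = Set.univ := by
      apply eq_univ_of_forall
      intro f
      refine mem_iUnion.mpr ⟨fun i => 0, f, fun i => i.elim0, ?_⟩
      simp [tuplePow]
    rw [hU, Submodule.span_univ]
    exact le_antisymm le_top (Submodule.le_topologicalClosure ⊤)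
  -- main case
  obtain ⟨j, -, hj⟩ := Finset.exists_min_image Finset.univ t ⟨⟨0, hd⟩, Finset.mem_univ _⟩
  have hmin : ∀ i, t j ≤ t i := fun i => hj i (Finset.mem_univ i)
  have htj : 0 < t j := ht j
  obtain ⟨c, hc, hwlb⟩ := hlb j
  set T : H →L[ℂ] H := S' j with hT
  set W : ℕ → ℝ → ℝ :=
    fun n x => ∏ l ∈ Finset.range n, (wt (φ j) (t j) (x - l * t j))⁻¹ with hW
  have hae0' : ∀ᵐ x ∂mu, x ∈ Ici (0:ℝ) := ae_restrict_mem measurableSet_Ici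
  -- a.e. formula for T^n
  have hTn : ∀ (n : ℕ) (u : H), ∀ᵐ x ∂mu, (((T ^ n) u : H) : ℝ → ℂ) x =
      if (n : ℝ) * t j ≤ x then ((W n x : ℝ) : ℂ) * (u : ℝ → ℂ) (x - n * t j) else 0 := by
    intro n
    induction n with
    | zero =>
      intro u
      have h1 : (((T ^ 0) u : H) : ℝ → ℂ) = (u : ℝ → ℂ) := by rw [pow_zero]; rfl
      filter_upwards [hae0'] with x hx
      rw [h1]
      simp only [hW, Nat.cast_zero, zero_mul, Finset.range_zero, Finset.prod_empty, sub_zero]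
      rw [if_pos (show (0:ℝ) ≤ x from hx), Complex.ofReal_one, one_mul]
    | succ n ihn =>
      intro u
      have h1 := ihn (T u)
      have h2 := ae_shift (c := (n : ℝ) * t j) (by positivity) (hS' j u)
      have h3 : (((T ^ (n+1)) u : H) : ℝ → ℂ) = (((T ^ n) (T u) : H) : ℝ → ℂ) := by
        rw [pow_succ]; rfl
      filter_upwards [h1, h2] with x hx1 hx2
      rw [h3, hx1]
      by_cases hxn : (n : ℝ) * t j ≤ x
      · rw [if_pos hxn, hx2 hxn]
        by_cases hxm : t j ≤ x - n * t j
        · rw [if_pos hxm, if_pos (by push_cast; linarith)]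
          have hWs : W (n+1) x = W n x * (wt (φ j) (t j) (x - n * t j))⁻¹ := by
            simp only [hW, Finset.prod_range_succ]
          have harg : x - (n:ℝ) * t j - t j = x - ((n:ℕ)+1 : ℝ) * t j := by ring
          rw [harg] at *
          rw [hWs]
          push_cast
          ring
        · rw [if_neg hxm, if_neg (by push_cast; intro hcon; exact hxm (by linarith)), mul_zero]
      · rw [if_neg hxn, if_neg (by push_cast; intro hcon; exact hxn (by nlinarith))]
  -- joint kernel membership
  have hker : ∀ f : H, (∀ᵐ x ∂mu, t j ≤ x → (f : ℝ → ℂ) x = 0) → f ∈ jointKer S := by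
    intro f hf i
    apply ext_inner_right ℂ
    intro v
    rw [adjoint_inner_left, inner_zero_left, L2.inner_def]
    apply integral_eq_zero_of_ae
    filter_upwards [(hS i).eval v, hf] with x hx1 hx2
    by_cases hxt : t i ≤ x
    · rw [hx2 (le_trans (hmin i) hxt)]
      simp
    · rw [hx1, if_neg hxt]
      simp
  rw [Submodule.topologicalClosure_eq_top_iff, Submodule.eq_bot_iff]
  intro g hg
  have hpair : ∀ (n : ℕ) (f : H), f ∈ jointKer S → (inner ℂ ((T ^ n) f) g : ℂ) = 0 := by
    intro n f hf
    have htp : tuplePow S' (fun i => if i = j then n else 0) = T ^ n := by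
      rw [tuplePow]
      have := prod_ofFn_eq_single (fun i => S' i ^ (if i = j then n else 0)) j
        (fun i hi => by simp [hi])
      simpa using this
    have hmem : (T ^ n) f ∈ (⋃ k : Fin d → ℕ, ⇑(tuplePow S' k) '' jointKer S) :=
      mem_iUnion.mpr ⟨fun i => if i = j then n else 0, f, hf, by rw [htp]⟩
    exact (Submodule.mem_orthogonal _ g).mp hg _ (Submodule.subset_span hmem)
  -- per-interval vanishing
  have hzero : ∀ n : ℕ, ∀ᵐ x ∂(mu.restrict (Ico ((n:ℝ) * t j) ((n:ℝ) * t j + t j))),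
      (g : ℝ → ℂ) x = 0 := by
    intro n
    set J : Set ℝ := Ico ((n:ℝ) * t j) ((n:ℝ) * t j + t j) with hJ
    have hJm : MeasurableSet J := measurableSet_Ico
    have hWfac : ∀ᵐ x ∂mu, ∀ l : ℕ, l < n → x ∈ J → c ≤ wt (φ j) (t j) (x - l * t j) := by
      rw [ae_all_iff]
      intro l
      by_cases hl : l < n
      · have h1 := ae_shift (c := (l:ℝ) * t j) (by positivity) hwlb
        filter_upwards [h1] with x hx _ hxJ
        have hln : ((l:ℝ) + 1) ≤ (n:ℝ) := by exact_mod_cast hl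
        have hx1 : (l:ℝ) * t j ≤ x := by nlinarith [hxJ.1]
        exact hx hx1 (by nlinarith [hxJ.1])
      · filter_upwards with x hcon
        exact absurd hcon hl
    have hWb : ∀ᵐ x ∂mu, x ∈ J → (0 < W n x ∧ W n x ≤ c⁻¹ ^ n) := by
      filter_upwards [hWfac] with x hx hxJ
      have hpos : ∀ l ∈ Finset.range n, 0 < (wt (φ j) (t j) (x - l * t j))⁻¹ := fun l hl =>
        inv_pos.mpr (lt_of_lt_of_le hc (hx l (Finset.mem_range.mp hl) hxJ))
      refine ⟨Finset.prod_pos hpos, ?_⟩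
      calc W n x ≤ ∏ _l ∈ Finset.range n, c⁻¹ :=
            Finset.prod_le_prod (fun l hl => le_of_lt (hpos l hl))
              (fun l hl => inv_anti₀ hc (hx l (Finset.mem_range.mp hl) hxJ))
        _ = c⁻¹ ^ n := by rw [Finset.prod_const, Finset.card_range]
    have hWm : AEMeasurable (W n) mu := by
      apply Finset.aemeasurable_fun_prod
      intro l _
      exact (wt_shift_aemeasurable (hφ j) htj (by positivity)).inv
    set h : ℝ → ℂ := fun x => ((W n x : ℝ) : ℂ) * (g : ℝ → ℂ) x with hh
    have hWmC : AEStronglyMeasurable (fun x => ((W n x : ℝ) : ℂ)) mu :=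
      (Complex.measurable_ofReal.comp_aemeasurable hWm).aestronglyMeasurable
    haveI finJ : IsFiniteMeasure (mu.restrict J) := by
      constructor
      rw [Measure.restrict_apply_univ]
      calc mu J = volume (J ∩ Ici 0) := Measure.restrict_apply' measurableSet_Ici
        _ ≤ volume J := measure_mono inter_subset_left
        _ < ⊤ := by rw [hJ, Real.volume_Ico]; exact ENNReal.ofReal_lt_top
    have hgint : Integrable (g : ℝ → ℂ) (mu.restrict J) :=
      ((Lp.memLp g).restrict J).integrable (by norm_num)
    have hint : Integrable h (mu.restrict J) := by
      apply Integrable.bdd_mul (c := c⁻¹ ^ n) hgint hWmC.restrict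
      rw [ae_restrict_iff' hJm]
      filter_upwards [hWb] with x hx hxJ
      rw [Complex.norm_real, Real.norm_eq_abs, abs_of_pos (hx hxJ).1]
      exact (hx hxJ).2
    have hsi : ∀ s, MeasurableSet s → (mu.restrict J) s < ⊤ →
        ∫ x in s, h x ∂(mu.restrict J) = 0 := by
      intro s hs _
      rw [Measure.restrict_restrict hs]
      set B : Set ℝ := s ∩ J with hB
      have hBm : MeasurableSet B := hs.inter hJm
      have hBsub : B ⊆ J := inter_subset_right
      set A : Set ℝ := (fun y => y + (n:ℝ) * t j) ⁻¹' B with hA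
      have hAm : MeasurableSet A := hBm.preimage (measurable_add_const _)
      have hAsub : A ⊆ Ico (0:ℝ) (t j) := by
        intro y hy
        have h5 := hBsub hy
        rw [hJ] at h5
        simp only [mem_Ico] at h5 ⊢
        constructor
        · nlinarith [h5.1, htj]
        · linarith [h5.2]
      have hAfin : mu A ≠ ⊤ := by
        apply ne_of_lt
        calc mu A ≤ mu (Ico 0 (t j)) := measure_mono hAsub
          _ = volume (Ico 0 (t j) ∩ Ici 0) := Measure.restrict_apply' measurableSet_Ici
          _ ≤ volume (Ico 0 (t j)) := measure_mono inter_subset_left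
          _ < ⊤ := by rw [Real.volume_Ico]; exact ENNReal.ofReal_lt_top
      set f : H := indicatorConstLp 2 hAm hAfin (1 : ℂ) with hfdef
      have hfc : (f : ℝ → ℂ) =ᵐ[mu] A.indicator (fun _ => (1:ℂ)) := indicatorConstLp_coeFn
      have hfker : f ∈ jointKer S := by
        apply hker
        filter_upwards [hfc] with x hx hxt
        rw [hx, indicator_of_notMem]
        intro hcon
        have := hAsub hcon
        simp only [mem_Ico] at this
        linarith [this.2]
      have h0 := hpair n f hfker
      rw [L2.inner_def] at h0
      have hshift := ae_shift (c := (n:ℝ) * t j) (by positivity) hfc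
      have hmemA : ∀ x : ℝ, x - (n:ℝ) * t j ∈ A ↔ x ∈ B := by
        intro x
        rw [hA, mem_preimage, sub_add_cancel]
      have hcong : ∀ᵐ x ∂mu,
          (inner ℂ ((((T ^ n) f : H) : ℝ → ℂ) x) ((g : ℝ → ℂ) x) : ℂ) = B.indicator h x := by
        filter_upwards [hTn n f, hshift] with x hx1 hx2
        rw [RCLike.inner_apply, hx1]
        by_cases hxn : (n:ℝ) * t j ≤ x
        · rw [if_pos hxn, hx2 hxn]
          by_cases hxB : x ∈ B
          · rw [indicator_of_mem ((hmemA x).mpr hxB), indicator_of_mem hxB, hh]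
            simp [Complex.conj_ofReal, mul_comm]
          · rw [indicator_of_notMem (fun hcon => hxB ((hmemA x).mp hcon)),
              indicator_of_notMem hxB]
            simp
        · rw [if_neg hxn, indicator_of_notMem]
          · simp
          · intro hcon
            have h6 := hBsub hcon
            rw [hJ] at h6
            exact hxn h6.1
      calc ∫ x in B, h x ∂mu = ∫ x, B.indicator h x ∂mu := (integral_indicator hBm).symm
        _ = ∫ x, (inner ℂ ((((T ^ n) f : H) : ℝ → ℂ) x) ((g : ℝ → ℂ) x) : ℂ) ∂mu :=
            (integral_congr_ae hcong).symm
        _ = 0 := h0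
    have hae0 : h =ᵐ[mu.restrict J] 0 :=
      hint.ae_eq_zero_of_forall_setIntegral_eq_zero hsi
    have hWb' : ∀ᵐ x ∂(mu.restrict J), 0 < W n x := by
      rw [ae_restrict_iff' hJm]
      filter_upwards [hWb] with x hx hxJ
      exact (hx hxJ).1
    filter_upwards [hae0, hWb'] with x hx1 hx2
    have hne : ((W n x : ℝ) : ℂ) ≠ 0 := by
      exact_mod_cast ne_of_gt hx2
    have hx1' : ((W n x : ℝ) : ℂ) * (g : ℝ → ℂ) x = 0 := hx1
    exact (mul_eq_zero.mp hx1').resolve_left hne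
  -- assemble
  have hgae : ∀ᵐ x ∂mu, (g : ℝ → ℂ) x = 0 := by
    have h1 : ∀ᵐ x ∂mu, ∀ n : ℕ,
        x ∈ Ico ((n:ℝ) * t j) ((n:ℝ) * t j + t j) → (g : ℝ → ℂ) x = 0 :=
      ae_all_iff.mpr (fun n => ae_imp_of_ae_restrict (hzero n))
    filter_upwards [h1, hae0'] with x hx1 hx2
    set n : ℕ := ⌊x / t j⌋₊ with hn
    apply hx1 n
    have hx0 : (0:ℝ) ≤ x := hx2
    have hfl : (n:ℝ) ≤ x / t j := Nat.floor_le (div_nonneg hx0 (le_of_lt htj))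
    have hfl2 : x / t j < (n:ℝ) + 1 := Nat.lt_floor_add_one _
    constructor
    · exact (le_div_iff₀ htj).mp hfl
    · have := (div_lt_iff₀ htj).mp hfl2
      nlinarith
  exact Lp.eq_zero_iff_ae_eq_zero.mpr hgae

end WTS
end
end

section
/- Let S_𝐭 = (S_{1,t₁},…,S_{d,t_d}) be a commuting d-tuple of weighted translation operators with t₁,…,t_d > 0 and set t_r = min{t₁,…,t_d}. For each i ∈ ℕ, the joint kernel ⋂_{j=1}^d ker (S_{j,t_j}^*)^i equals { f ∈ L²(ℝ₊) : f = 0 a.e. on [i t_r, ∞) }, and the union over all i ∈ ℕ of these joint kernels is dense in L²(ℝ₊). -/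
open MeasureTheory Set ContinuousLinearMap

noncomputable section

namespace WTS

lemma mu_ae_nonneg : ∀ᵐ x ∂mu, 0 ≤ x := ae_restrict_mem measurableSet_Ici

lemma measurePreserving_shift (c : ℝ) :
    MeasurePreserving (fun y : ℝ => y + c) mu (volume.restrict (Ici c)) := by
  refine ⟨measurable_add_const c, ?_⟩
  have h1 : (fun y : ℝ => y + c) ⁻¹' (Ici c) = Ici 0 := by
    ext y; simp [Set.mem_Ici]
  rw [mu, ← h1, ← (measurableEmbedding_addRight c).restrict_map,
    (measurePreserving_add_right volume c).map_eq]

lemma ae_translate {P : ℝ → Prop} (c : ℝ) (hc : 0 ≤ c) (h : ∀ᵐ y ∂mu, P y) :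
    ∀ᵐ x ∂mu, c ≤ x → P (x - c) := by
  have mp := measurePreserving_shift c
  have h2 : ∀ᵐ x ∂(volume.restrict (Ici c)), P (x - c) := by
    rw [← mp.map_eq, (measurableEmbedding_addRight c).ae_map_iff]
    simpa using h
  have h3 : mu.restrict (Ici c) = volume.restrict (Ici c) := by
    rw [mu, Measure.restrict_restrict measurableSet_Ici,
      inter_eq_left.mpr (Ici_subset_Ici.mpr hc)]
  exact ae_imp_of_ae_restrict (h3 ▸ h2)

lemma wt_nonneg (φ : ℝ → ℝ) (t x : ℝ) : 0 ≤ wt φ t x := by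
  unfold wt; split
  · exact Real.sqrt_nonneg _
  · exact le_refl 0

lemma wt_pos {φ : ℝ → ℝ} {t : ℝ} (hφ : IsSymbol φ) (ht : 0 < t) {x : ℝ} (hx : t ≤ x) :
    0 < wt φ t x := by
  rw [wt, if_pos hx]
  exact Real.sqrt_pos.mpr (div_pos (hφ.pos x (le_trans ht.le hx))
    (hφ.pos _ (sub_nonneg.2 hx)))

lemma wt_continuousOn {φ : ℝ → ℝ} {t : ℝ} (hφ : IsSymbol φ) (ht : 0 < t) :
    ContinuousOn (wt φ t) (Ici t) := by
  have c1 : ContinuousOn (fun x => φ x) (Ici t) := hφ.cont.mono (Ici_subset_Ici.mpr ht.le)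
  have c2 : ContinuousOn (fun x => φ (x - t)) (Ici t) := by
    apply hφ.cont.comp (continuous_sub_right t).continuousOn
    intro x hx; exact mem_Ici.mpr (sub_nonneg.2 (mem_Ici.mp hx))
  have c3 : ContinuousOn (fun x => Real.sqrt (φ x / φ (x - t))) (Ici t) :=
    Real.continuous_sqrt.comp_continuousOn
      (c1.div c2 (fun x hx => (hφ.pos _ (mem_Ici.mpr (sub_nonneg.2 (mem_Ici.mp hx)))).ne'))
  exact c3.congr (fun x hx => by rw [wt]; exact if_pos hx)

/-- The product weight for `S^i`. -/
def Wprod (φ : ℝ → ℝ) (t : ℝ) (i : ℕ) (x : ℝ) : ℝ :=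
  ∏ k ∈ Finset.range i, wt φ t (x - k * t)

lemma sub_mem_Ici_t {t x : ℝ} {i k : ℕ} (ht : 0 < t) (hk : k < i)
    (hx : (i : ℝ) * t ≤ x) : t ≤ x - (k : ℝ) * t := by
  have : ((k : ℝ) + 1) ≤ (i : ℝ) := by exact_mod_cast hk
  nlinarith

lemma Wprod_pos {φ : ℝ → ℝ} {t : ℝ} (hφ : IsSymbol φ) (ht : 0 < t) (i : ℕ) {x : ℝ}
    (hx : (i : ℝ) * t ≤ x) : 0 < Wprod φ t i x := by
  apply Finset.prod_pos
  intro k hk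
  exact wt_pos hφ ht (sub_mem_Ici_t ht (Finset.mem_range.mp hk) hx)

lemma Wprod_continuousOn {φ : ℝ → ℝ} {t : ℝ} (hφ : IsSymbol φ) (ht : 0 < t) (i : ℕ) :
    ContinuousOn (Wprod φ t i) (Ici ((i : ℝ) * t)) := by
  apply continuousOn_finset_prod
  intro k hk
  apply (wt_continuousOn hφ ht).comp (continuous_sub_right _).continuousOn
  intro x hx
  exact sub_mem_Ici_t ht (Finset.mem_range.mp hk) hx

lemma Wprod_succ (φ : ℝ → ℝ) (t : ℝ) (i : ℕ) (x : ℝ) :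
    Wprod φ t (i + 1) x = Wprod φ t i (x - t) * wt φ t x := by
  rw [Wprod, Finset.prod_range_succ']
  congr 1
  · apply Finset.prod_congr rfl
    intro k _
    congr 1
    push_cast; ring
  · congr 1; push_cast; ring


lemma pow_eval {φ : ℝ → ℝ} {t : ℝ} {S : H →L[ℂ] H} (ht : 0 < t)
    (hS : IsWT φ t S) (i : ℕ) (g : H) :
    ∀ᵐ x ∂mu, ((S ^ i) g : ℝ → ℂ) x =
      if (i : ℝ) * t ≤ x then (Wprod φ t i x : ℂ) * (g : ℝ → ℂ) (x - i * t) else 0 := by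
  induction i with
  | zero =>
    have he : (S ^ 0) g = g := by rw [pow_zero, ContinuousLinearMap.one_apply]
    filter_upwards [mu_ae_nonneg] with x hx
    rw [he]
    simp [Wprod, hx]
  | succ i IH =>
    have he : (S ^ (i + 1)) g = S ((S ^ i) g) := by rw [pow_succ', ContinuousLinearMap.mul_apply]
    have h1 := hS.eval ((S ^ i) g)
    have h2 := ae_translate t ht.le IH
    filter_upwards [h1, h2] with x hx1 hx2
    rw [he, hx1]
    have hii : ((i : ℕ) + 1 : ℕ) * t = (i : ℝ) * t + t := by push_cast; ring
    by_cases hc : ((i : ℕ) + 1 : ℕ) * t ≤ x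
    · have hc' : (i : ℝ) * t + t ≤ x := by rw [← hii]; exact hc
      have hct : t ≤ x := by nlinarith [mul_nonneg (Nat.cast_nonneg (α := ℝ) i) ht.le]
      have hit : (i : ℝ) * t ≤ x - t := by linarith
      rw [if_pos hct, hx2 hct, if_pos hit, if_pos hc]
      have harg : x - t - (i : ℝ) * t = x - ((i : ℕ) + 1 : ℕ) * t := by push_cast; ring
      rw [harg, Wprod_succ]
      push_cast
      ring
    · rw [if_neg hc]
      by_cases hct : t ≤ x
      · have : ¬ ((i : ℝ) * t ≤ x - t) := by
          intro h; apply hc; rw [hii]; linarith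
        rw [if_pos hct, hx2 hct, if_neg this, mul_zero]
      · rw [if_neg hct]


lemma adjoint_pow (S : H →L[ℂ] H) (i : ℕ) :
    ContinuousLinearMap.adjoint (S ^ i) = ContinuousLinearMap.adjoint S ^ i := by
  rw [← star_eq_adjoint, star_pow, star_eq_adjoint]

lemma inner_eq_integral (f h : H) :
    (inner ℂ f h : ℂ) = ∫ x, (starRingEnd ℂ) ((f : ℝ → ℂ) x) * (h : ℝ → ℂ) x ∂mu := by
  rw [L2.inner_def]
  congr 1
  funext x; rw [RCLike.inner_apply, mul_comm]

lemma ker_pow_of_ae {φ : ℝ → ℝ} {t : ℝ} {S : H →L[ℂ] H} (ht : 0 < t)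
    (hS : IsWT φ t S) (i : ℕ) (f : H)
    (hf : ∀ᵐ x ∂mu, (i : ℝ) * t ≤ x → (f : ℝ → ℂ) x = 0) :
    (ContinuousLinearMap.adjoint S ^ i) f = 0 := by
  rw [← adjoint_pow]
  rw [← inner_self_eq_zero (𝕜 := ℂ), adjoint_inner_left, inner_eq_integral]
  apply integral_eq_zero_of_ae
  filter_upwards [pow_eval ht hS i (ContinuousLinearMap.adjoint (S ^ i) f), hf] with x h1 h2
  by_cases hx : (i : ℝ) * t ≤ x
  · rw [h2 hx]; simp
  · rw [h1, if_neg hx, mul_zero]; rfl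


set_option maxHeartbeats 1000000 in
lemma ae_of_ker_pow {φ : ℝ → ℝ} {t : ℝ} {S : H →L[ℂ] H} (hφ : IsSymbol φ) (ht : 0 < t)
    (hS : IsWT φ t S) (i : ℕ) (f : H)
    (h : (ContinuousLinearMap.adjoint S ^ i) f = 0) :
    ∀ᵐ x ∂mu, (i : ℝ) * t ≤ x → (f : ℝ → ℂ) x = 0 := by
  have hc0 : (0 : ℝ) ≤ (i : ℝ) * t := by positivity
  have hinner : ∀ g : H,
      (∫ x, (starRingEnd ℂ) ((f : ℝ → ℂ) x) * ((S ^ i) g : ℝ → ℂ) x ∂mu) = 0 := by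
    intro g
    rw [← inner_eq_integral, ← adjoint_inner_left, adjoint_pow, h, inner_zero_left]
  set c := (i : ℝ) * t with hcdef
  have key : ∀ n : ℕ, ∀ᵐ x ∂mu, x ∈ Icc c (c + n) → (f : ℝ → ℂ) x = 0 := by
    intro n
    obtain ⟨M, hM⟩ := (isCompact_Icc (a := c) (b := c + n)).exists_bound_of_continuousOn
      ((Wprod_continuousOn hφ ht i).mono Icc_subset_Ici_self)
    set gfun : ℝ → ℂ := (Icc (0 : ℝ) (n : ℝ)).indicator
      (fun y => (f : ℝ → ℂ) (y + c) * ((Wprod φ t i (y + c) : ℝ) : ℂ)) with hgdef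
    have hfc : MemLp (fun y => (f : ℝ → ℂ) (y + c)) 2 mu := by
      have h1 : MemLp (f : ℝ → ℂ) 2 (volume.restrict (Ici c)) :=
        (Lp.memLp f).mono_measure
          (Measure.restrict_mono (Ici_subset_Ici.mpr hc0) le_rfl)
      exact h1.comp_measurePreserving (measurePreserving_shift c)
    have hWsm : AEStronglyMeasurable (fun y => ((Wprod φ t i (y + c) : ℝ) : ℂ)) mu := by
      have hcont : ContinuousOn (fun y => ((Wprod φ t i (y + c) : ℝ) : ℂ)) (Ici 0) := by
        apply Complex.continuous_ofReal.comp_continuousOn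
        apply (Wprod_continuousOn hφ ht i).comp (continuous_add_right c).continuousOn
        intro y hy
        exact le_add_of_nonneg_left (mem_Ici.mp hy)
      exact hcont.aestronglyMeasurable measurableSet_Ici
    have hgsm : AEStronglyMeasurable gfun mu :=
      ((hfc.aestronglyMeasurable.mul hWsm).indicator measurableSet_Icc)
    have hmem : MemLp gfun 2 mu := by
      refine MemLp.of_le_mul (c := |M|) hfc hgsm ?_
      apply Filter.Eventually.of_forall
      intro y
      by_cases hy : y ∈ Icc (0 : ℝ) (n : ℝ)
      · rw [hgdef, indicator_of_mem hy]
        rw [norm_mul, Complex.norm_real]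
        have hyc : y + c ∈ Icc c (c + n) := ⟨le_add_of_nonneg_left hy.1, by
          have := hy.2; linarith⟩
        have := hM (y + c) hyc
        rw [Real.norm_eq_abs] at this
        calc ‖(f : ℝ → ℂ) (y + c)‖ * |Wprod φ t i (y + c)|
            ≤ ‖(f : ℝ → ℂ) (y + c)‖ * |M| := by
              apply mul_le_mul_of_nonneg_left (le_trans this (le_abs_self M)) (norm_nonneg _)
          _ = |M| * ‖(f : ℝ → ℂ) (y + c)‖ := mul_comm _ _
      · rw [hgdef, indicator_of_notMem hy]
        simp only [norm_zero]
        positivity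
    obtain ⟨g0, hcoe⟩ : ∃ g0 : H, ∀ᵐ y ∂mu, (g0 : ℝ → ℂ) y = gfun y :=
      ⟨hmem.toLp gfun, hmem.coeFn_toLp⟩
    have h0 := hinner g0
    have hev := pow_eval ht hS i g0
    have hg0t := ae_translate c hc0 hcoe
    set u : ℝ → ℝ := (Icc c (c + n)).indicator
      (fun x => ‖(f : ℝ → ℂ) x‖ ^ 2 * (Wprod φ t i x) ^ 2) with hudef
    have hae : (fun x => (starRingEnd ℂ) ((f : ℝ → ℂ) x) * ((S ^ i) g0 : ℝ → ℂ) x)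
        =ᵐ[mu] fun x => (u x : ℂ) := by
      filter_upwards [hev, hg0t] with x h1 h2
      by_cases hx : c ≤ x
      · rw [h1, if_pos hx, h2 hx]
        by_cases hx2 : x - c ∈ Icc (0 : ℝ) (n : ℝ)
        · have hx3 : x ∈ Icc c (c + n) := ⟨hx, by have := hx2.2; linarith⟩
          rw [hgdef]
          simp only [indicator_of_mem hx2, hudef, indicator_of_mem hx3, sub_add_cancel]
          calc (starRingEnd ℂ) ((f : ℝ → ℂ) x) *
                ((Wprod φ t i x : ℂ) * ((f : ℝ → ℂ) x * (Wprod φ t i x : ℂ)))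
              = ((starRingEnd ℂ) ((f : ℝ → ℂ) x) * (f : ℝ → ℂ) x) * (Wprod φ t i x : ℂ) ^ 2 := by
                ring
            _ = (((‖(f : ℝ → ℂ) x‖ ^ 2 * (Wprod φ t i x) ^ 2 : ℝ)) : ℂ) := by
                rw [RCLike.conj_mul]; norm_cast; exact (RCLike.ofReal_mul _ _).symm
        · have hx3 : x ∉ Icc c (c + n) := by
            intro hmem2
            exact hx2 ⟨by linarith [hmem2.1], by linarith [hmem2.2]⟩
          rw [hgdef]
          simp only [indicator_of_notMem hx2, indicator_of_notMem hx3, hudef]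
          simp
      · have hx3 : x ∉ Icc c (c + n) := fun hmem2 => hx hmem2.1
        rw [h1, if_neg hx, mul_zero, hudef]
        simp only [indicator_of_notMem hx3]
        simp
    have hint : Integrable (fun x => (u x : ℂ)) mu := by
      have h2 := L2.integrable_inner (𝕜 := ℂ) f ((S ^ i) g0)
      simp only [RCLike.inner_apply] at h2
      exact (h2.congr (Filter.Eventually.of_forall fun x => mul_comm _ _)).congr hae
    have hu_int : Integrable u mu := by
      have h3 := hint.re
      apply h3.congr
      apply Filter.Eventually.of_forall
      intro x
      simp
    have hu0 : ∫ x, u x ∂mu = 0 := by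
      have h4 : ∫ x, (u x : ℂ) ∂mu = 0 := by rw [← integral_congr_ae hae]; exact h0
      have h5 : (RCLike.ofReal (K := ℂ) (∫ x, u x ∂mu)) = 0 := by
        rw [← integral_ofReal]; exact h4
      exact RCLike.ofReal_eq_zero.mp h5
    have huz : u =ᵐ[mu] 0 := by
      rw [← integral_eq_zero_iff_of_nonneg _ hu_int]
      · exact hu0
      · intro x
        apply indicator_nonneg
        intro y _
        positivity
    filter_upwards [huz] with x hx hmemx
    rw [Pi.zero_apply, hudef, indicator_of_mem hmemx] at hx
    have hW := Wprod_pos hφ ht i hmemx.1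
    have h5 : ‖(f : ℝ → ℂ) x‖ ^ 2 = 0 := by
      rcases mul_eq_zero.mp hx with h6 | h6
      · exact h6
      · exact absurd h6 (pow_pos hW 2).ne'
    simpa using h5
  have hall := ae_all_iff.mpr key
  filter_upwards [hall] with x hx hcx
  obtain ⟨n, hn⟩ := exists_nat_ge (x - c)
  exact hx n ⟨hcx, by linarith⟩



set_option maxHeartbeats 1000000 in
/-- for each `i ∈ ℕ` the joint kernel `⋂_j ker (S_{j,t_j}*)^i` equals
`{f : f = 0 a.e. on [i·t_r, ∞)}`, where `t_r = min{t₁, …, t_d}`, and the union of these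
joint kernels over `i ∈ ℕ` is dense in `L²(ℝ₊)`. -/
theorem statement_15 {d : ℕ} (φ : Fin d → ℝ → ℝ) (t : Fin d → ℝ)
    (S : Fin d → (H →L[ℂ] H))
    (hφ : ∀ i, IsSymbol (φ i)) (ht : ∀ i, 0 < t i)
    (hS : ∀ i, IsWT (φ i) (t i) (S i))
    (hcomm : ∀ i j, S i * S j = S j * S i)
    (tr : ℝ) (htr : IsLeast (Set.range t) tr) :
    (∀ (i : ℕ) (f : H),
      (∀ j, (ContinuousLinearMap.adjoint (S j) ^ i) f = 0) ↔
        ∀ᵐ x ∂mu, (i : ℝ) * tr ≤ x → (f : ℝ → ℂ) x = 0) ∧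
    Dense {f : H | ∃ i : ℕ, ∀ j, (ContinuousLinearMap.adjoint (S j) ^ i) f = 0} := by
  obtain ⟨j0, hj0⟩ := htr.1
  have htr0 : 0 < tr := hj0 ▸ ht j0
  have part1 : ∀ (i : ℕ) (f : H),
      (∀ j, (ContinuousLinearMap.adjoint (S j) ^ i) f = 0) ↔
        ∀ᵐ x ∂mu, (i : ℝ) * tr ≤ x → (f : ℝ → ℂ) x = 0 := by
    intro i f
    constructor
    · intro hk
      have h1 := ae_of_ker_pow (hφ j0) (ht j0) (hS j0) i f (hk j0)
      rw [hj0] at h1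
      exact h1
    · intro haf j
      apply ker_pow_of_ae (ht j) (hS j) i f
      have htj : tr ≤ t j := htr.2 ⟨j, rfl⟩
      filter_upwards [haf] with x hx h6
      exact hx (le_trans (mul_le_mul_of_nonneg_left htj (Nat.cast_nonneg i)) h6)
  refine ⟨part1, ?_⟩
  have hdense : ∀ f : H,
      f ∈ closure {f : H | ∃ i : ℕ, ∀ j, (ContinuousLinearMap.adjoint (S j) ^ i) f = 0} := by
    intro f
    have hmem : ∀ n : ℕ, MemLp ((Iio ((n : ℝ) * tr)).indicator (f : ℝ → ℂ)) 2 mu :=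
      fun n => (Lp.memLp f).indicator measurableSet_Iio
    set fn : ℕ → H := fun n => ((hmem n).toLp _) with hfn
    have hmemD : ∀ n, fn n ∈
        {g : H | ∃ i : ℕ, ∀ j, (ContinuousLinearMap.adjoint (S j) ^ i) g = 0} := by
      intro n
      refine ⟨n, (part1 n (fn n)).mpr ?_⟩
      filter_upwards [(hmem n).coeFn_toLp] with x hx hnx
      rw [hx, indicator_of_notMem (by simpa using hnx)]
    have htend : Filter.Tendsto fn Filter.atTop (nhds f) := by
      rw [tendsto_iff_dist_tendsto_zero]
      set L : ℕ → ENNReal := fun n =>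
        ∫⁻ x, (Ici ((n : ℝ) * tr)).indicator
          (fun x => ((‖(f : ℝ → ℂ) x‖₊ : ENNReal)) ^ (2 : ℝ)) x ∂mu with hLdef
      have heq : ∀ n : ℕ, dist (fn n) f = ((L n) ^ (1 / (2 : ℝ))).toReal := by
        intro n
        rw [Lp.dist_def]
        congr 1
        have hae2 : (⇑(fn n) - ⇑f)
            =ᵐ[mu] (Ici ((n : ℝ) * tr)).indicator (fun x => -((f : ℝ → ℂ) x)) := by
          filter_upwards [(hmem n).coeFn_toLp] with x hx
          rw [Pi.sub_apply, hx]
          by_cases hc : x ∈ Iio ((n : ℝ) * tr)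
          · rw [indicator_of_mem hc, indicator_of_notMem (by simpa using hc)]
            simp
          · rw [indicator_of_notMem hc, indicator_of_mem (by simpa using hc)]
            simp
        rw [eLpNorm_congr_ae hae2,
          eLpNorm_eq_lintegral_rpow_enorm_toReal (by norm_num) (by norm_num), hLdef]
        rw [show ((2 : ENNReal).toReal) = (2 : ℝ) by norm_num]
        congr 1
        apply lintegral_congr
        intro x
        by_cases hc : x ∈ Ici ((n : ℝ) * tr)
        · rw [indicator_of_mem hc, indicator_of_mem hc]
          simp [enorm_eq_nnnorm]
        · rw [indicator_of_notMem hc, indicator_of_notMem hc]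
          rw [enorm_zero]
          simp [ENNReal.zero_rpow_of_pos]
      have hbmeas : AEMeasurable (fun x => ((‖(f : ℝ → ℂ) x‖₊ : ENNReal)) ^ (2 : ℝ)) mu :=
        ENNReal.continuous_rpow_const.measurable.comp_aemeasurable
          (Lp.aestronglyMeasurable f).enorm
      have hbnd : (∫⁻ x, ((‖(f : ℝ → ℂ) x‖₊ : ENNReal)) ^ (2 : ℝ) ∂mu) ≠ ⊤ := by
        have h1 : eLpNorm (f : ℝ → ℂ) 2 mu < ⊤ := Lp.eLpNorm_lt_top f
        rw [eLpNorm_eq_lintegral_rpow_enorm_toReal (by norm_num) (by norm_num),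
          show ((2 : ENNReal).toReal) = (2 : ℝ) by norm_num] at h1
        simp only [enorm_eq_nnnorm] at h1
        intro hcon
        rw [hcon, ENNReal.top_rpow_of_pos (by norm_num)] at h1
        exact absurd h1 (lt_irrefl _)
      have hL0 : Filter.Tendsto L Filter.atTop (nhds 0) := by
        rw [hLdef]
        have hdc := tendsto_lintegral_of_dominated_convergence' (μ := mu)
          (F := fun n => (Ici ((n : ℝ) * tr)).indicator
            (fun x => ((‖(f : ℝ → ℂ) x‖₊ : ENNReal)) ^ (2 : ℝ)))
          (f := fun _ => (0 : ENNReal))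
          (bound := fun x => ((‖(f : ℝ → ℂ) x‖₊ : ENNReal)) ^ (2 : ℝ))
          (fun n => hbmeas.indicator measurableSet_Ici)
          (fun n => Filter.Eventually.of_forall (fun x => indicator_le_self _ _ x))
          hbnd ?_
        · simpa using hdc
        · apply Filter.Eventually.of_forall
          intro x
          obtain ⟨N, hN⟩ := exists_nat_gt (x / tr)
          apply Filter.Tendsto.congr' (f₁ := fun _ => (0 : ENNReal))
          · rw [Filter.eventuallyEq_iff_exists_mem]
            refine ⟨{n | N ≤ n}, Filter.mem_atTop N, ?_⟩
            intro n hn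
            have hxn : x < (n : ℝ) * tr := by
              have h7 : x / tr < (n : ℝ) := lt_of_lt_of_le hN (by exact_mod_cast hn)
              calc x = (x / tr) * tr := by field_simp
                _ < (n : ℝ) * tr := by apply mul_lt_mul_of_pos_right h7 htr0
            exact (indicator_of_notMem (by simpa using hxn) _).symm
          · exact tendsto_const_nhds
      have hfin : Filter.Tendsto (fun n => ((L n) ^ (1 / (2 : ℝ))).toReal)
          Filter.atTop (nhds 0) := by
        have h8 : Filter.Tendsto (fun n => (L n) ^ (1 / (2 : ℝ))) Filter.atTop (nhds 0) := by
          have h9 := (ENNReal.continuous_rpow_const (y := 1 / (2 : ℝ))).tendsto 0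
          have h10 := h9.comp hL0
          rwa [ENNReal.zero_rpow_of_pos (by norm_num)] at h10
        have h11 := (ENNReal.tendsto_toReal (a := 0) (by simp)).comp h8
        simpa [Function.comp_def] using h11
      apply Filter.Tendsto.congr (fun n => (heq n).symm) hfin
    exact mem_closure_of_tendsto htend (Filter.Eventually.of_forall hmemD)
  exact hdense


end WTS
end
end
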